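/- Let (A, ⋆, [,], P, ω) be a quadratic Rota–Baxter Poisson algebra of weight λ, and let (A, ∗, ∘) be the compatible anti-pre-Poisson algebra defined by ω(x∗y, z) = -ω(x, y⋆z) and ω(x∘y, z) = ω(y, [x,z]). Then P is a Rota–Baxter operator of weight λ on (A, ∗, ∘): P(x)∗P(y) = P(P(x)∗y + x∗P(y) + λ x∗y) and P(x)∘P(y) = P(P(x)∘y + x∘P(y) + λ x∘y) for all x, y ∈ A; hence (A, ∗, ∘, P, ω) is a quadratic Rota–Baxter anti-pre-Poisson algebra of weight λ. -/
import Mathlib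


/-- if `(A, ⋆, [,], P, ω)` is a quadratic Rota–Baxter Poisson algebra of
weight `λ` and `(∗, ∘)` is the compatible anti-pre-Poisson structure defined by
`ω(x∗y, z) = -ω(x, y⋆z)` and `ω(x∘y, z) = ω(y, [x,z])`, then `P` is a Rota–Baxter
operator of weight `λ` on `(A, ∗, ∘)`; hence `(A, ∗, ∘, P, ω)` is a quadratic
Rota–Baxter anti-pre-Poisson algebra of weight `λ`. -/
theorem quadratic_RB_poisson_to_antiPrePoisson {k A : Type*} [Field k] [AddCommGroup A]
    [Module k A]
    (st br : A →ₗ[k] A →ₗ[k] A)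
    (hcomm : ∀ x y : A, st x y = st y x)
    (hassoc : ∀ x y z : A, st (st x y) z = st x (st y z))
    (halt : ∀ x : A, br x x = 0)
    (hjac : ∀ x y z : A, br (br x y) z + br (br y z) x + br (br z x) y = 0)
    (hleib : ∀ x y z : A, br z (st x y) = st (br z x) y + st x (br z y))
    (ω : A →ₗ[k] A →ₗ[k] k)
    (hsym : ∀ x y : A, ω x y = ω y x)
    (hnondeg : ∀ x : A, (∀ y : A, ω x y = 0) → x = 0)
    (hconnes : ∀ x y z : A, ω (st x y) z + ω (st y z) x + ω (st z x) y = 0)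
    (hcocycle : ∀ x y z : A, ω (br x y) z + ω (br y z) x + ω (br z x) y = 0)
    (P : A →ₗ[k] A) (lam : k)
    (hPst : ∀ x y : A, st (P x) (P y) = P (st (P x) y + st x (P y) + lam • st x y))
    (hPbr : ∀ x y : A, br (P x) (P y) = P (br (P x) y + br x (P y) + lam • br x y))
    (hPω : ∀ x y : A, ω (P x) y + ω x (P y) + lam * ω x y = 0)
    (s c : A →ₗ[k] A →ₗ[k] A)
    (hsdef : ∀ x y z : A, ω (s x y) z = - ω x (st y z))
    (hcdef : ∀ x y z : A, ω (c x y) z = ω y (br x z)) :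
    (∀ x y : A, s (P x) (P y) = P (s (P x) y + s x (P y) + lam • s x y)) ∧
    (∀ x y : A, c (P x) (P y) = P (c (P x) y + c x (P y) + lam • c x y)) := by
  have hP' : ∀ a b : A, ω (P a) b = -ω a (P b) - lam * ω a b := by
    intro a b; linear_combination hPω a b
  have hext : ∀ a b : A, (∀ z, ω a z = ω b z) → a = b := by
    intro a b h
    have h0 : ∀ z, ω (a - b) z = 0 := by
      intro z; simp [map_sub, LinearMap.sub_apply, h z]
    exact sub_eq_zero.mp (hnondeg _ h0)
  constructor
  · intro x y
    apply hext
    intro z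
    simp only [map_add, map_smul, LinearMap.add_apply, LinearMap.smul_apply, smul_eq_mul,
      hsdef, hP', hPst, map_add, map_smul]
    ring
  · intro x y
    apply hext
    intro z
    simp only [map_add, map_smul, LinearMap.add_apply, LinearMap.smul_apply, smul_eq_mul,
      hcdef, hP', hPbr, map_add, map_smul]
    ring
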